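/- Let p : Fin n → ℕ with ∑ i, p i = m. The block-sum map κ_p : (∏_{i : Fin n} Equiv.Perm (Fin (p i))) → Equiv.Perm (Fin m), which lets the i-th factor act on the i-th block of Fin m via the order isomorphism of that block with Fin (p i) and fixes nothing else, is an injective group homomorphism whose image is exactly Stab(g_p). -/

import Mathlib

/-- The cardinality of the fiber of `f` at `i`, i.e. `p_i(f) = |f⁻¹({i})|`. -/
def fiberCard {m n : ℕ} (f : Fin m → Fin n) (i : Fin n) : ℕ :=
  (Finset.univ.filter fun x => f x = i).card

section Aux

variable {n m : ℕ} {p : Fin n → ℕ} {g : Fin m → Fin n}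

/-- offset of block `i` -/
def blockOff (p : Fin n → ℕ) (i : Fin n) : ℕ :=
  ∑ j ∈ Finset.univ.filter fun j => j < i, p j

lemma key_lemma (hg : Monotone g) (hfib : ∀ i, fiberCard g i = p i)
    (q : Fin n → Prop) [DecidablePred q] (hq : ∀ {a b : Fin n}, a ≤ b → q b → q a)
    (x : Fin m) : (x : ℕ) < ∑ j ∈ Finset.univ.filter q, p j ↔ q (g x) := by
  classical
  set S : Finset (Fin m) := Finset.univ.filter fun x => q (g x) with hS
  have hcard : S.card = ∑ j ∈ Finset.univ.filter q, p j := by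
    rw [Finset.card_eq_sum_card_fiberwise (f := g) (t := Finset.univ.filter q)
      (by intro x hx; simp only [hS, Finset.mem_coe, Finset.mem_filter, Finset.mem_univ, true_and] at hx
          simp [hx])]
    refine Finset.sum_congr rfl fun j hj => ?_
    have hqj : q j := (Finset.mem_filter.mp hj).2
    rw [← hfib j]
    congr 1
    ext x
    simp only [hS, Finset.mem_filter, Finset.mem_univ, true_and, fiberCard]
    constructor
    · rintro ⟨_, h⟩; exact h
    · rintro h; exact ⟨h ▸ hqj, h⟩
  have hlower : ∀ {a b : Fin m}, a ≤ b → b ∈ S → a ∈ S := by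
    intro a b hab hb
    simp only [hS, Finset.mem_filter, Finset.mem_univ, true_and] at hb ⊢
    exact hq (hg hab) hb
  rw [← hcard]
  constructor
  · intro h
    by_contra hx
    have hxS : x ∉ S := by simpa [hS] using hx
    have hsub : S ⊆ Finset.Iio x := by
      intro y hy
      simp only [Finset.mem_Iio]
      by_contra hxy
      exact hxS (hlower (not_lt.mp hxy) hy)
    have := Finset.card_le_card hsub
    rw [Fin.card_Iio] at this
    omega
  · intro h
    have hxS : x ∈ S := by simpa [hS] using h
    have hsub : Finset.Iic x ⊆ S := fun y hy => hlower (Finset.mem_Iic.mp hy) hxS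
    have := Finset.card_le_card hsub
    rw [Fin.card_Iic] at this
    omega

lemma off_add (p : Fin n → ℕ) (i : Fin n) :
    blockOff p i + p i = ∑ j ∈ Finset.univ.filter fun j => j ≤ i, p j := by
  classical
  have : (Finset.univ.filter fun j => j ≤ i) = insert i (Finset.univ.filter fun j => j < i) := by
    ext j; simp [le_iff_lt_or_eq, or_comm, eq_comm]
  rw [this, Finset.sum_insert (by simp), blockOff, add_comm]

lemma off_add_le (hp : ∑ i, p i = m) (i : Fin n) : blockOff p i + p i ≤ m := by
  rw [off_add, ← hp]
  exact Finset.sum_le_sum_of_subset (Finset.filter_subset _ _)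

lemma block_mem (hg : Monotone g) (hfib : ∀ i, fiberCard g i = p i) (x : Fin m) :
    blockOff p (g x) ≤ (x : ℕ) ∧ (x : ℕ) < blockOff p (g x) + p (g x) := by
  constructor
  · by_contra h
    have := (key_lemma hg hfib (fun j => j < g x) (fun hab hb => lt_of_le_of_lt hab hb) x).mp
      (by simpa [blockOff] using h)
    exact absurd this (lt_irrefl _)
  · rw [off_add]
    exact (key_lemma hg hfib (fun j => j ≤ g x) (fun hab hb => le_trans hab hb) x).mpr le_rfl

lemma block_eq (hg : Monotone g) (hfib : ∀ i, fiberCard g i = p i) (x : Fin m) (i : Fin n)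
    (h1 : blockOff p i ≤ (x : ℕ)) (h2 : (x : ℕ) < blockOff p i + p i) : g x = i := by
  have hlt : ¬ g x < i :=
    fun h => by have := (key_lemma hg hfib (fun j => j < i)
      (fun hab hb => lt_of_le_of_lt hab hb) x).mpr h; simp only [blockOff] at h1; omega
  have hle : g x ≤ i := by
    have := (key_lemma hg hfib (fun j => j ≤ i) (fun hab hb => le_trans hab hb) x).mp
      (by rw [← off_add] at *; omega)
    exact this
  exact le_antisymm hle (not_lt.mp hlt)

/-- the block equivalence -/
def blockEquiv (hp : ∑ i, p i = m) (hg : Monotone g) (hfib : ∀ i, fiberCard g i = p i) :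
    (Σ i : Fin n, Fin (p i)) ≃ Fin m where
  toFun s := ⟨blockOff p s.1 + s.2, by
    have := off_add_le hp s.1; have := s.2.isLt; omega⟩
  invFun x := ⟨g x, ⟨(x : ℕ) - blockOff p (g x), by
    have := block_mem hg hfib x; omega⟩⟩
  left_inv s := by
    obtain ⟨i, k⟩ := s
    have hb : blockOff p i + (k : ℕ) < m := by
      have := off_add_le hp i; have := k.isLt; omega
    have hgv : g ⟨blockOff p i + (k : ℕ), hb⟩ = i :=
      block_eq hg hfib _ i (by simp) (by simpa using Nat.add_lt_add_left k.isLt _)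
    refine Sigma.ext hgv ?_
    rw [Fin.heq_ext_iff (by simp [hgv])]
    simp [hgv]
  right_inv x := by
    have := block_mem hg hfib x
    apply Fin.ext
    simp
    omega

end Aux

theorem stmt_5 (n m : ℕ) (p : Fin n → ℕ) (hp : ∑ i, p i = m)
    (g : Fin m → Fin n) (hg : Monotone g) (hfib : ∀ i, fiberCard g i = p i) :
    ∃ κ : (∀ i, Equiv.Perm (Fin (p i))) →* Equiv.Perm (Fin m),
      (∀ (β : ∀ i, Equiv.Perm (Fin (p i))) (i : Fin n) (k : Fin (p i)) (x : Fin m),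
          (x : ℕ) = (∑ j ∈ Finset.univ.filter fun j => j < i, p j) + (k : ℕ) →
          ((κ β x : ℕ) = (∑ j ∈ Finset.univ.filter fun j => j < i, p j) + (β i k : ℕ))) ∧
      Function.Injective κ ∧
      Set.range ⇑κ = {τ : Equiv.Perm (Fin m) | g ∘ ⇑τ = g} := by
  set e := blockEquiv hp hg hfib with he
  refine ⟨{ toFun := fun β => e.permCongr (Equiv.Perm.sigmaCongrRightHom _ β)
            map_one' := by ext x; simp
            map_mul' := fun β γ => by ext x; simp [Equiv.permCongr_apply] }, ?_, ?_, ?_⟩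
  · intro β i k x hx
    have hxe : x = e ⟨i, k⟩ := by apply Fin.ext; simpa [he, blockEquiv, blockOff] using hx
    subst hxe
    simp only [MonoidHom.coe_mk, OneHom.coe_mk, Equiv.permCongr_apply, Equiv.symm_apply_apply]
    simp [he, blockEquiv, blockOff]
  · intro β γ h
    apply Equiv.Perm.sigmaCongrRightHom_injective (β := fun i => Fin (p i))
    exact e.permCongr.injective (by simpa using h)
  · ext τ
    simp only [Set.mem_range, Set.mem_setOf_eq]
    constructor
    · rintro ⟨β, rfl⟩
      funext x
      obtain ⟨⟨i, k⟩, rfl⟩ := e.surjective x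
      simp only [Function.comp_apply, MonoidHom.coe_mk, OneHom.coe_mk, Equiv.permCongr_apply,
        Equiv.symm_apply_apply]
      have h1 : g (e ⟨i, β i k⟩) = i := by
        apply block_eq hg hfib _ i <;> simp [he, blockEquiv, blockOff]
      have h2 : g (e ⟨i, k⟩) = i := by
        apply block_eq hg hfib _ i <;> simp [he, blockEquiv, blockOff]
      simp only [Equiv.Perm.sigmaCongrRightHom_apply, Equiv.sigmaCongrRight_apply]
      rw [h1, h2]
    · intro hτ
      -- construct β
      have hgblock : ∀ (σ : Equiv.Perm (Fin m)) (_ : g ∘ σ = g) (i : Fin n) (k : Fin (p i)),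
          blockOff p i ≤ (σ (e ⟨i, k⟩) : ℕ) ∧ (σ (e ⟨i, k⟩) : ℕ) < blockOff p i + p i := by
        intro σ hσ i k
        have hge : g (e ⟨i, k⟩) = i := by
          apply block_eq hg hfib _ i <;> simp [he, blockEquiv, blockOff]
        have : g (σ (e ⟨i, k⟩)) = i := by
          have := congrFun hσ (e ⟨i, k⟩); simp only [Function.comp_apply] at this
          rw [this, hge]
        have hb := block_mem hg hfib (σ (e ⟨i, k⟩))
        rw [this] at hb
        exact hb
      set φ : (σ : Equiv.Perm (Fin m)) → g ∘ σ = g → ∀ i : Fin n, Fin (p i) → Fin (p i) :=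
        fun σ hσ i k => ⟨(σ (e ⟨i, k⟩) : ℕ) - blockOff p i, by have := hgblock σ hσ i k; omega⟩
        with hφ
      have hτinv : g ∘ ⇑τ⁻¹ = g := by
        funext x
        have := congrFun hτ (τ⁻¹ x)
        simpa using this.symm
      have hback : ∀ (σ : Equiv.Perm (Fin m)) (hσ : g ∘ σ = g) (i : Fin n) (k : Fin (p i)),
          e ⟨i, φ σ hσ i k⟩ = σ (e ⟨i, k⟩) := by
        intro σ hσ i k
        apply Fin.ext
        have := hgblock σ hσ i k
        simp [hφ, he, blockEquiv, blockOff] at *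
        omega
      set β : ∀ i, Equiv.Perm (Fin (p i)) := fun i =>
        { toFun := φ τ hτ i
          invFun := φ τ⁻¹ hτinv i
          left_inv := fun k => by
            have h1 := hback τ hτ i k
            have h2 := hback τ⁻¹ hτinv i (φ τ hτ i k)
            rw [h1] at h2
            simp only [Equiv.Perm.coe_inv, Equiv.symm_apply_apply] at h2
            simpa using e.injective h2
          right_inv := fun k => by
            have h1 := hback τ⁻¹ hτinv i k
            have h2 := hback τ hτ i (φ τ⁻¹ hτinv i k)
            rw [h1] at h2
            simp only [Equiv.Perm.coe_inv, Equiv.apply_symm_apply] at h2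
            simpa using e.injective h2 } with hβ
      refine ⟨β, ?_⟩
      ext x
      obtain ⟨⟨i, k⟩, rfl⟩ := e.surjective x
      simp only [MonoidHom.coe_mk, OneHom.coe_mk, Equiv.permCongr_apply, Equiv.symm_apply_apply,
        Equiv.Perm.sigmaCongrRightHom_apply, Equiv.sigmaCongrRight_apply]
      have := hback τ hτ i k
      rw [← this]
      rfl
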